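/- arXiv:2410.19404 — 3 statements merged into one kernel-verified Lean document; each statement's English description precedes it below -/
import Mathlib

section
/- For any compact set K ⊆ ℝ^d and any point x ∈ K, if F is a tangent of K at x (i.e. F = lim_{k→∞} λ_k(K − x) ∩ B(0,1) in the Hausdorff metric for some sequence of scales λ_k → ∞), then the pointwise Assouad dimension of K at x is at least the upper box dimension of F. -/
open Metric Set Filter

/-- The least number of closed balls of radius `r` needed to cover `E`. -/
noncomputable def coverNum {X : Type*} [MetricSpace X] (E : Set X) (r : ℝ) : ℕ :=
  sInf {n : ℕ | ∃ S : Finset X, S.card = n ∧ E ⊆ ⋃ c ∈ S, closedBall c r}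

/-- Pointwise Assouad dimension of `K` at `x`. -/
noncomputable def pointwiseAssouad {X : Type*} [MetricSpace X] (K : Set X) (x : X) : ℝ :=
  sInf {s : ℝ | ∃ C > (0:ℝ), ∃ ρ > (0:ℝ), ∀ r R : ℝ, 0 < r → r ≤ R → R < ρ →
    (coverNum (closedBall x R ∩ K) r : ℝ) ≤ C * (R / r) ^ s}

/-- Upper box dimension of a bounded set `F`. -/
noncomputable def upperBoxDim {X : Type*} [MetricSpace X] (F : Set X) : ℝ :=
  Filter.limsup (fun r : ℝ => Real.log (coverNum F r) / Real.log (1 / r))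
    (nhdsWithin 0 (Set.Ioi 0))

lemma coverNum_le_card {X : Type*} [MetricSpace X] {E : Set X} {r : ℝ} {S : Finset X}
    (h : E ⊆ ⋃ c ∈ S, closedBall c r) : coverNum E r ≤ S.card :=
  Nat.sInf_le ⟨S, rfl, h⟩

lemma exists_coverNum {X : Type*} [MetricSpace X] {E : Set X} {r : ℝ}
    (hE : IsCompact E) (hr : 0 < r) :
    ∃ S : Finset X, S.card = coverNum E r ∧ E ⊆ ⋃ c ∈ S, closedBall c r := by
  have hne : {n : ℕ | ∃ S : Finset X, S.card = n ∧ E ⊆ ⋃ c ∈ S, closedBall c r}.Nonempty := by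
    obtain ⟨t, -, htf, hcov⟩ := finite_cover_balls_of_compact hE hr
    exact ⟨htf.toFinset.card, htf.toFinset, rfl, hcov.trans (by
      simp only [Set.Finite.mem_toFinset]
      exact Set.iUnion₂_mono fun c _ => ball_subset_closedBall)⟩
  exact Nat.sInf_mem hne

lemma one_le_coverNum {X : Type*} [MetricSpace X] {E : Set X} {r : ℝ}
    (hE : IsCompact E) (hne : E.Nonempty) (hr : 0 < r) : 1 ≤ coverNum E r := by
  obtain ⟨S, hcard, hcov⟩ := exists_coverNum hE hr
  obtain ⟨y, hy⟩ := hne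
  obtain ⟨c, hc, -⟩ := Set.mem_iUnion₂.1 (hcov hy)
  rw [← hcard]
  exact Finset.card_pos.2 ⟨c, hc⟩

open MeasureTheory in
open scoped ENNReal in
lemma pack_card_le {d : ℕ} {x : EuclideanSpace ℝ (Fin d)} {R r : ℝ} (hr : 0 < r) (hrR : r ≤ R)
    (S : Finset (EuclideanSpace ℝ (Fin d))) (hS : ↑S ⊆ closedBall x R)
    (hsep : (S : Set (EuclideanSpace ℝ (Fin d))).Pairwise (fun a b => r < dist a b)) :
    (S.card : ℝ) ≤ (4 * (R / r)) ^ d := by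
  set μ : Measure (EuclideanSpace ℝ (Fin d)) := volume
  have hR : 0 < R := hr.trans_le hrR
  have hdisj : (S : Set (EuclideanSpace ℝ (Fin d))).PairwiseDisjoint
      (fun c => ball c (r / 2)) := by
    intro a ha b hb hab
    apply Set.disjoint_left.2
    intro z hza hzb
    have : dist a b < r := by
      calc dist a b ≤ dist z a + dist z b := dist_triangle_left a b z
        _ < r / 2 + r / 2 := add_lt_add hza hzb
        _ = r := by ring
    exact absurd this (not_lt.2 (hsep ha hb hab).le)
  have hsub : ∀ c ∈ S, ball c (r / 2) ⊆ ball x (2 * R) := by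
    intro c hc z hz
    have hcx : dist c x ≤ R := hS hc
    calc dist z x ≤ dist z c + dist c x := dist_triangle z c x
      _ < r / 2 + R := add_lt_add_of_lt_of_le hz hcx
      _ ≤ 2 * R := by linarith
  have hmeas : ∑ c ∈ S, μ (ball c (r / 2)) ≤ μ (ball x (2 * R)) := by
    rw [← measure_biUnion_finset hdisj (fun c _ => measurableSet_ball)]
    exact measure_mono (Set.iUnion₂_subset hsub)
  have hfr : Module.finrank ℝ (EuclideanSpace ℝ (Fin d)) = d := by
    simp [finrank_euclideanSpace]
  have hballc : ∀ c : EuclideanSpace ℝ (Fin d),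
      μ (ball c (r / 2)) = ENNReal.ofReal ((r / 2) ^ d) * μ (ball 0 1) := by
    intro c
    rw [Measure.addHaar_ball_of_pos μ c (by linarith : (0:ℝ) < r / 2), hfr]
  have hballx : μ (ball x (2 * R)) = ENNReal.ofReal ((2 * R) ^ d) * μ (ball 0 1) := by
    rw [Measure.addHaar_ball_of_pos μ x (by linarith : (0:ℝ) < 2 * R), hfr]
  rw [Finset.sum_congr rfl (fun c _ => hballc c), Finset.sum_const, hballx] at hmeas
  have hBpos : 0 < μ (ball (0 : EuclideanSpace ℝ (Fin d)) 1) := measure_ball_pos μ 0 one_pos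
  have hBne : μ (ball (0 : EuclideanSpace ℝ (Fin d)) 1) ≠ ⊤ := measure_ball_lt_top.ne
  have hkey : (S.card : ℝ≥0∞) * ENNReal.ofReal ((r / 2) ^ d) ≤ ENNReal.ofReal ((2 * R) ^ d) := by
    rw [nsmul_eq_mul, ← mul_assoc] at hmeas
    exact (ENNReal.mul_le_mul_iff_left hBpos.ne' hBne).1 hmeas
  have hr2 : (0:ℝ) < (r / 2) ^ d := pow_pos (by linarith) d
  have hreal : (S.card : ℝ) * (r / 2) ^ d ≤ (2 * R) ^ d := by
    have := ENNReal.toReal_mono (by finiteness) hkey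
    simp only [ENNReal.toReal_mul, ENNReal.toReal_natCast, ENNReal.toReal_ofReal hr2.le,
      ENNReal.toReal_ofReal (by positivity : (0:ℝ) ≤ (2*R)^d)] at this
    exact this
  rw [← le_div_iff₀ hr2] at hreal
  calc (S.card : ℝ) ≤ (2 * R) ^ d / (r / 2) ^ d := hreal
    _ = (4 * (R / r)) ^ d := by
        rw [← div_pow]; congr 1; field_simp; ring

lemma coverNum_le_pow {d : ℕ} (x : EuclideanSpace ℝ (Fin d)) {R r : ℝ} (hr : 0 < r) (hrR : r ≤ R)
    {E : Set (EuclideanSpace ℝ (Fin d))} (hE : E ⊆ closedBall x R) :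
    (coverNum E r : ℝ) ≤ (4 * (R / r)) ^ d := by
  classical
  have hR : 0 < R := hr.trans_le hrR
  have h4 : (0:ℝ) ≤ 4 * (R / r) := by positivity
  set M : ℕ := ⌊(4 * (R / r)) ^ d⌋₊ with hM
  have hMle : (M : ℝ) ≤ (4 * (R / r)) ^ d := Nat.floor_le (pow_nonneg h4 d)
  set A : Set ℕ := {n : ℕ | ∃ S : Finset (EuclideanSpace ℝ (Fin d)), ↑S ⊆ E ∧
    (S : Set (EuclideanSpace ℝ (Fin d))).Pairwise (fun a b => r < dist a b) ∧ S.card = n} with hA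
  have hbdd : ∀ n ∈ A, n ≤ M := by
    rintro n ⟨S, h1, h2, rfl⟩
    exact Nat.le_floor (pack_card_le hr hrR S (h1.trans hE) h2)
  have h0 : 0 ∈ A := ⟨∅, by simp, by simp, by simp⟩
  have hsup : sSup A ∈ A := Nat.sSup_mem ⟨0, h0⟩ ⟨M, hbdd⟩
  obtain ⟨S, hSE, hSsep, hScard⟩ := hsup
  have hsymm : Symmetric (fun a b : EuclideanSpace ℝ (Fin d) => r < dist a b) := by
    intro a b h; rwa [dist_comm]
  have hcov : E ⊆ ⋃ c ∈ S, closedBall c r := by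
    intro y hy
    by_contra hny
    simp only [Set.mem_iUnion, mem_closedBall, not_exists, not_le, exists_prop, not_and] at hny
    have hny' : ∀ c ∈ S, r < dist y c := hny
    have hyS : y ∉ S := fun h => absurd (hny' y h) (by simp [hr.not_gt])
    have hmem : S.card + 1 ∈ A := by
      refine ⟨insert y S, ?_, ?_, ?_⟩
      · rw [Finset.coe_insert]
        exact Set.insert_subset hy hSE
      · rw [Finset.coe_insert]
        rw [Set.pairwise_insert]
        exact ⟨hSsep, fun b hb _ => ⟨hny' b hb, hsymm (hny' b hb)⟩⟩
      · rw [Finset.card_insert_of_notMem hyS]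
    have := le_csSup ⟨M, hbdd⟩ hmem
    omega
  have h1 : coverNum E r ≤ S.card := coverNum_le_card hcov
  have h2 : S.card ≤ M := hbdd _ ⟨S, hSE, hSsep, rfl⟩
  calc (coverNum E r : ℝ) ≤ (M : ℝ) := by exact_mod_cast h1.trans h2
    _ ≤ _ := hMle

/-- If `F` is a tangent of a compact set `K ⊆ ℝ^d` at `x ∈ K`, then the pointwise
Assouad dimension of `K` at `x` is at least the upper box dimension of `F`. -/
theorem stmt0 {d : ℕ} (K : Set (EuclideanSpace ℝ (Fin d))) (hK : IsCompact K)
    (x : EuclideanSpace ℝ (Fin d)) (hx : x ∈ K)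
    (F : Set (EuclideanSpace ℝ (Fin d))) (hFc : IsCompact F) (hFne : F.Nonempty)
    (hFsub : F ⊆ closedBall 0 1)
    (lam : ℕ → ℝ) (hlam : Tendsto lam atTop atTop)
    (hconv : Tendsto
      (fun k => hausdorffDist ((fun y => lam k • (y - x)) '' K ∩ closedBall 0 1) F)
      atTop (nhds 0)) :
    upperBoxDim F ≤ pointwiseAssouad K x := by
  classical
  -- the defining set for the pointwise Assouad dimension is nonempty
  have hdmem : (d : ℝ) ∈ {s : ℝ | ∃ C > (0:ℝ), ∃ ρ > (0:ℝ), ∀ r R : ℝ, 0 < r → r ≤ R → R < ρ →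
      (coverNum (closedBall x R ∩ K) r : ℝ) ≤ C * (R / r) ^ s} := by
    refine ⟨(4:ℝ) ^ d, by positivity, 1, one_pos, fun r R hr hrR _ => ?_⟩
    have hRr : (0:ℝ) ≤ R / r := div_nonneg (hr.le.trans hrR) hr.le
    calc (coverNum (closedBall x R ∩ K) r : ℝ) ≤ (4 * (R / r)) ^ d :=
          coverNum_le_pow x hr hrR Set.inter_subset_left
      _ = (4:ℝ) ^ d * (R / r) ^ (d : ℝ) := by
          rw [mul_pow, Real.rpow_natCast]
  apply le_csInf ⟨(d : ℝ), hdmem⟩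
  rintro s ⟨C, hC, ρ, hρ, hs⟩
  -- key covering estimate for F
  have key : ∀ r : ℝ, 0 < r → r < 1 → (coverNum F (2 * r) : ℝ) ≤ C * (1 / r) ^ s := by
    intro r hr hr1
    have hev : ∀ᶠ k in atTop, max (1 / ρ) 1 < lam k ∧
        hausdorffDist ((fun y => lam k • (y - x)) '' K ∩ closedBall 0 1) F < r :=
      (hlam.eventually_gt_atTop (max (1 / ρ) 1)).and (hconv.eventually_lt_const hr)
    obtain ⟨k, hk1, hk2⟩ := hev.exists
    set l : ℝ := lam k with hl
    have hl1 : 1 < l := lt_of_le_of_lt (le_max_right _ _) hk1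
    have hlpos : 0 < l := lt_trans one_pos hl1
    have hlρ : 1 / l < ρ := by
      rw [div_lt_iff₀ hlpos]
      have : 1 / ρ < l := lt_of_le_of_lt (le_max_left _ _) hk1
      rw [div_lt_iff₀ hρ] at this
      linarith [mul_comm ρ l]
    set T : EuclideanSpace ℝ (Fin d) → EuclideanSpace ℝ (Fin d) := fun y => l • (y - x) with hT
    have hTdist : ∀ a b : EuclideanSpace ℝ (Fin d), dist (T a) (T b) = l * dist a b := by
      intro a b
      simp only [hT, dist_eq_norm, ← smul_sub]
      rw [sub_sub_sub_cancel_right, norm_smul, Real.norm_eq_abs, abs_of_pos hlpos]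
    set E : Set (EuclideanSpace ℝ (Fin d)) := closedBall x (1 / l) ∩ K with hE
    have hEc : IsCompact E := hK.inter_left isClosed_closedBall
    have hrl : 0 < r / l := div_pos hr hlpos
    obtain ⟨S, hScard, hScov⟩ := exists_coverNum hEc hrl
    -- the rescaled set is contained in the image of E
    set A : Set (EuclideanSpace ℝ (Fin d)) := T '' K ∩ closedBall 0 1 with hAdef
    have hAsub : A ⊆ T '' E := by
      rintro z ⟨⟨y, hyK, rfl⟩, hz⟩
      refine ⟨y, ⟨?_, hyK⟩, rfl⟩
      rw [mem_closedBall, dist_zero_right] at hz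
      rw [hT] at hz
      rw [norm_smul, Real.norm_eq_abs, abs_of_pos hlpos] at hz
      rw [mem_closedBall, dist_eq_norm]
      rw [le_div_iff₀ hlpos, mul_comm]
      exact hz
    -- transport the cover of E to a cover of A
    have hAcov : A ⊆ ⋃ c ∈ S.image T, closedBall c r := by
      intro z hz
      obtain ⟨y, hyE, rfl⟩ := hAsub hz
      obtain ⟨c, hc, hyc⟩ := Set.mem_iUnion₂.1 (hScov hyE)
      refine Set.mem_iUnion₂.2 ⟨T c, Finset.mem_image_of_mem T hc, ?_⟩
      rw [mem_closedBall, hTdist]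
      rw [mem_closedBall] at hyc
      calc l * dist y c ≤ l * (r / l) := by
            exact mul_le_mul_of_nonneg_left hyc hlpos.le
        _ = r := mul_div_cancel₀ r hlpos.ne'
    -- enlarge to a cover of F
    have hAne : A.Nonempty := ⟨T x, ⟨⟨x, hx, rfl⟩, by simp [hT]⟩⟩
    have hfin : EMetric.hausdorffEdist A F ≠ ⊤ :=
      hausdorffEdist_ne_top_of_nonempty_of_bounded hAne hFne
        (Metric.isBounded_closedBall.subset Set.inter_subset_right)
        (Metric.isBounded_closedBall.subset hFsub)
    have hFcov : F ⊆ ⋃ c ∈ S.image T, closedBall c (2 * r) := by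
      intro y hy
      obtain ⟨z, hzA, hyz⟩ := exists_dist_lt_of_hausdorffDist_lt' hy hk2 hfin
      obtain ⟨c, hc, hzc⟩ := Set.mem_iUnion₂.1 (hAcov hzA)
      refine Set.mem_iUnion₂.2 ⟨c, hc, ?_⟩
      rw [mem_closedBall] at hzc ⊢
      calc dist y c ≤ dist y z + dist z c := dist_triangle y z c
        _ ≤ r + r := add_le_add (le_of_lt (dist_comm y z ▸ hyz)) hzc
        _ = 2 * r := by ring
    -- put everything together
    have h1 : coverNum F (2 * r) ≤ S.card :=
      le_trans (coverNum_le_card hFcov) (Finset.card_image_le)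
    have h2 : (coverNum E (r / l) : ℝ) ≤ C * ((1 / l) / (r / l)) ^ s :=
      hs (r / l) (1 / l) hrl ((div_le_div_iff_of_pos_right hlpos).2 hr1.le) hlρ
    have h3 : (1 / l) / (r / l) = 1 / r := by
      field_simp
    rw [h3] at h2
    calc (coverNum F (2 * r) : ℝ) ≤ (S.card : ℝ) := by exact_mod_cast h1
      _ = (coverNum E (r / l) : ℝ) := by rw [hScard]
      _ ≤ C * (1 / r) ^ s := h2
  -- from the covering estimate to the upper box dimension bound
  have hL : Tendsto (fun t : ℝ => Real.log (1 / t)) (nhdsWithin 0 (Set.Ioi 0)) atTop := by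
    have h1 : Tendsto (fun t : ℝ => 1 / t) (nhdsWithin 0 (Set.Ioi 0)) atTop := by
      simpa [one_div] using tendsto_inv_nhdsGT_zero
    exact Real.tendsto_log_atTop.comp h1
  have hcobdd : IsCoboundedUnder (· ≤ ·) (nhdsWithin (0:ℝ) (Set.Ioi 0))
      (fun t : ℝ => Real.log (coverNum F t) / Real.log (1 / t)) := by
    apply isCoboundedUnder_le_of_eventually_le _ (x := (0:ℝ))
    filter_upwards [self_mem_nhdsWithin, hL.eventually_ge_atTop 1] with t ht hlog
    have ht' : (0:ℝ) < t := ht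
    have hN : (1:ℝ) ≤ (coverNum F t : ℝ) := by
      exact_mod_cast one_le_coverNum hFc hFne ht'
    exact div_nonneg (Real.log_nonneg hN) (by linarith)
  have hbox : ∀ ε : ℝ, 0 < ε → upperBoxDim F ≤ s + ε := by
    intro ε hε
    set B : ℝ := max 1 ((Real.log C + s * Real.log 2) / ε) with hB
    apply limsup_le_of_le hcobdd
    filter_upwards [self_mem_nhdsWithin, hL.eventually_ge_atTop B] with t ht hlog
    have ht' : (0:ℝ) < t := ht
    have hLt : 1 ≤ Real.log (1 / t) := le_trans (le_max_left _ _) hlog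
    have hLpos : 0 < Real.log (1 / t) := by linarith
    have ht1 : t < 1 := by
      by_contra h
      push_neg at h
      have : 1 / t ≤ 1 := by
        rw [div_le_one ht']; exact h
      have := Real.log_nonpos (by positivity) this
      linarith
    have hN1 : (1:ℝ) ≤ (coverNum F t : ℝ) := by
      exact_mod_cast one_le_coverNum hFc hFne ht'
    have hbound : (coverNum F t : ℝ) ≤ C * (2 / t) ^ s := by
      have := key (t / 2) (by linarith) (by linarith)
      rw [show 2 * (t / 2) = t by ring, show 1 / (t / 2) = 2 / t by ring] at this
      exact this
    have hrpow : (0:ℝ) < (2 / t) ^ s := Real.rpow_pos_of_pos (by positivity) s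
    have hlogN : Real.log (coverNum F t) ≤
        Real.log C + s * Real.log 2 + s * Real.log (1 / t) := by
      calc Real.log (coverNum F t) ≤ Real.log (C * (2 / t) ^ s) :=
            Real.log_le_log (by linarith) hbound
        _ = Real.log C + s * Real.log (2 / t) := by
            rw [Real.log_mul hC.ne' hrpow.ne', Real.log_rpow (by positivity)]
        _ = Real.log C + s * Real.log 2 + s * Real.log (1 / t) := by
            rw [Real.log_div two_ne_zero ht'.ne', Real.log_div one_ne_zero ht'.ne', Real.log_one]
            ring
    rw [div_le_iff₀ hLpos]
    have hBε : Real.log C + s * Real.log 2 ≤ ε * Real.log (1 / t) := by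
      have h1 : (Real.log C + s * Real.log 2) / ε ≤ Real.log (1 / t) :=
        le_trans (le_max_right _ _) hlog
      rw [div_le_iff₀ hε] at h1
      linarith [h1]
    nlinarith [hLpos, hlogN, hBε]
  have : ∀ ε : ℝ, 0 < ε → upperBoxDim F ≤ s + ε := hbox
  exact le_of_forall_pos_le_add this
end

section
/- The equation 3^{-s} + 2·6^{-s} = 1 has a unique real solution s, and this solution satisfies 0.72 < s < 0.73. -/
private noncomputable def f9 (s : ℝ) : ℝ := (3 : ℝ) ^ (-s) + 2 * (6 : ℝ) ^ (-s)

private lemma f9_anti : StrictAnti f9 := by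
  intro s t hst
  unfold f9
  have h1 : (3 : ℝ) ^ (-t) < (3 : ℝ) ^ (-s) :=
    Real.rpow_lt_rpow_of_exponent_lt (by norm_num) (by linarith)
  have h2 : (6 : ℝ) ^ (-t) < (6 : ℝ) ^ (-s) :=
    Real.rpow_lt_rpow_of_exponent_lt (by norm_num) (by linarith)
  linarith

private lemma cont_base (b : ℝ) (hb : 0 < b) : Continuous fun s : ℝ => b ^ (-s) := by
  have h : (fun s : ℝ => b ^ (-s)) = fun s => Real.exp (Real.log b * (-s)) := by
    ext s; rw [Real.rpow_def_of_pos hb]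
  rw [h]
  exact Real.continuous_exp.comp (continuous_const.mul continuous_neg)

private lemma f9_cont : Continuous f9 :=
  (cont_base 3 (by norm_num)).add (continuous_const.mul (cont_base 6 (by norm_num)))

private lemma pow_key (b : ℝ) (hb : 0 < b) (s : ℝ) (n m : ℕ)
    (hns : (n : ℝ) * s = m) : (b ^ (-s)) ^ n = (b ^ m)⁻¹ := by
  rw [← Real.rpow_natCast (b ^ (-s)) n, ← Real.rpow_mul hb.le, neg_mul, mul_comm, hns,
    Real.rpow_neg hb.le, Real.rpow_natCast]

private lemma rpow_lb (b a : ℝ) (hb : 0 < b) (ha : 0 ≤ a) (s : ℝ) (n m : ℕ)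
    (hn : 0 < n) (hns : (n : ℝ) * s = m) (h : a ^ n * b ^ m < 1) : a < b ^ (-s) := by
  have hpos : (0:ℝ) < b ^ (-s) := Real.rpow_pos_of_pos hb _
  refine lt_of_pow_lt_pow_left₀ n hpos.le ?_
  rw [pow_key b hb s n m hns, inv_eq_one_div, lt_div_iff₀ (by positivity)]
  exact h

private lemma rpow_ub (b a : ℝ) (hb : 0 < b) (ha : 0 ≤ a) (s : ℝ) (n m : ℕ)
    (hn : 0 < n) (hns : (n : ℝ) * s = m) (h : 1 < a ^ n * b ^ m) : b ^ (-s) < a := by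
  have hpos : (0:ℝ) < b ^ (-s) := Real.rpow_pos_of_pos hb _
  refine lt_of_pow_lt_pow_left₀ n ha ?_
  rw [pow_key b hb s n m hns, inv_eq_one_div, div_lt_iff₀ (by positivity)]
  exact h

private lemma f9_at_72 : 1 < f9 0.72 := by
  have h1 : (0.4533 : ℝ) < (3:ℝ) ^ (-(0.72:ℝ)) := by
    apply rpow_lb 3 0.4533 (by norm_num) (by norm_num) 0.72 25 18 (by norm_num) (by norm_num)
    norm_num
  have h2 : (0.2751 : ℝ) < (6:ℝ) ^ (-(0.72:ℝ)) := by
    apply rpow_lb 6 0.2751 (by norm_num) (by norm_num) 0.72 25 18 (by norm_num) (by norm_num)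
    norm_num
  unfold f9
  linarith

private lemma f9_at_73 : f9 0.73 < 1 := by
  have h1 : (3:ℝ) ^ (-(0.73:ℝ)) < 0.449 := by
    apply rpow_ub 3 0.449 (by norm_num) (by norm_num) 0.73 100 73 (by norm_num) (by norm_num)
    norm_num
  have h2 : (6:ℝ) ^ (-(0.73:ℝ)) < 0.273 := by
    apply rpow_ub 6 0.273 (by norm_num) (by norm_num) 0.73 100 73 (by norm_num) (by norm_num)
    norm_num
  unfold f9
  linarith

/-- The equation `3^{-s} + 2·6^{-s} = 1` has a unique real solution `s`, and this
solution satisfies `0.72 < s < 0.73`. -/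
theorem stmt9 :
    (∃! s : ℝ, (3 : ℝ) ^ (-s) + 2 * (6 : ℝ) ^ (-s) = 1) ∧
    (∀ s : ℝ, (3 : ℝ) ^ (-s) + 2 * (6 : ℝ) ^ (-s) = 1 →
      (0.72 : ℝ) < s ∧ s < (0.73 : ℝ)) := by
  have hbounds : ∀ s : ℝ, f9 s = 1 → (0.72 : ℝ) < s ∧ s < (0.73 : ℝ) := by
    intro s hs
    constructor
    · by_contra h
      push_neg at h
      have h72 := f9_anti.antitone h
      linarith [f9_at_72]
    · by_contra h
      push_neg at h
      have h73 := f9_anti.antitone h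
      linarith [f9_at_73]
  have hex : ∃ s ∈ Set.Icc (0.72:ℝ) 0.73, f9 s = 1 := by
    have hsub := intermediate_value_Icc' (by norm_num : (0.72:ℝ) ≤ 0.73)
      (f9_cont.continuousOn)
    have h1 : (1:ℝ) ∈ Set.Icc (f9 0.73) (f9 0.72) :=
      ⟨f9_at_73.le, f9_at_72.le⟩
    obtain ⟨s, hs, hfs⟩ := hsub h1
    exact ⟨s, hs, hfs⟩
  obtain ⟨s₀, _, hs₀⟩ := hex
  refine ⟨⟨s₀, hs₀, fun y hy => f9_anti.injective (by rw [show f9 y = 1 from hy, hs₀])⟩,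
    hbounds⟩
end

section
/- Let K ⊆ ℝ² be the attractor of a Gatzouras–Lalley IFS and η the projection to the x-axis. If the projected IFS {S_{i,1}} satisfies the strong separation condition (the images S_{i,1}(η(K)) for distinct columns are pairwise disjoint), then every point x ∈ K is regular: for each r ∈ (0,1) there is a finite word 𝚒 over the alphabet with contraction a_𝚒 ≤ C·r (C independent of x, r) such that B(η(x), r) ∩ η(K) ⊆ S_{𝚒,1}(η(K)). -/
open Metric Set

/-- For a Gatzouras–Lalley IFS whose projected system satisfies the strong separation
condition, every point of the attractor `K` is regular: there is a constant `C > 0`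
such that for every `x ∈ K` and `r ∈ (0,1)` there is a finite word `w` with contraction
`a_w ≤ C r` whose projected cylinder captures `B(η(x), r) ∩ η(K)`. -/
theorem stmt15 {I : Type*} [Fintype I] [Nonempty I]
    (a b d₁ d₂ : I → ℝ)
    (hab : ∀ i, 0 < b i ∧ b i < a i ∧ a i < 1)
    (T : I → ℝ × ℝ → ℝ × ℝ)
    (hT : ∀ i p, T i p = (a i * p.1 + d₁ i, b i * p.2 + d₂ i))
    (hself : ∀ i, T i '' (Icc (0:ℝ) 1 ×ˢ Icc (0:ℝ) 1) ⊆ Icc (0:ℝ) 1 ×ˢ Icc (0:ℝ) 1)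
    (hdisj : ∀ i j, i ≠ j →
      Disjoint (T i '' (Ioo (0:ℝ) 1 ×ˢ Ioo (0:ℝ) 1)) (T j '' (Ioo (0:ℝ) 1 ×ˢ Ioo (0:ℝ) 1)))
    (hcol : ∀ i j, (a i = a j ∧ d₁ i = d₁ j) ∨
      Disjoint (Ioo (d₁ i) (d₁ i + a i)) (Ioo (d₁ j) (d₁ j + a j)))
    (K : Set (ℝ × ℝ)) (hKc : IsCompact K) (hKne : K.Nonempty)
    (hKsub : K ⊆ Icc (0:ℝ) 1 ×ˢ Icc (0:ℝ) 1)
    (hKinv : K = ⋃ i, T i '' K)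
    (Kη : Set ℝ) (hKη : Kη = Prod.fst '' K)
    (hSSC : ∀ i j, ¬(a i = a j ∧ d₁ i = d₁ j) →
      Disjoint ((fun x => a i * x + d₁ i) '' Kη) ((fun x => a j * x + d₁ j) '' Kη)) :
    ∃ C : ℝ, 0 < C ∧ ∀ x ∈ K, ∀ r : ℝ, 0 < r → r < 1 →
      ∃ w : List I,
        (w.map a).prod ≤ C * r ∧
        ball x.1 r ∩ Kη ⊆
          (w.foldr (fun i f => (fun y => a i * y + d₁ i) ∘ f) id) '' Kη := by
  classical
  obtain ⟨i₀⟩ := ‹Nonempty I›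
  set S : I → ℝ → ℝ := fun i y => a i * y + d₁ i with hS
  set Sw : List I → ℝ → ℝ :=
    fun w => w.foldr (fun i f => (fun y => a i * y + d₁ i) ∘ f) id with hSw
  have ha0 : ∀ i, 0 < a i := fun i => lt_trans (hab i).1 (hab i).2.1
  have ha1 : ∀ i, a i < 1 := fun i => (hab i).2.2
  -- Kη facts
  have hKηc : IsCompact Kη := hKη ▸ hKc.image continuous_fst
  have hcomm : ∀ i, Prod.fst ∘ T i = S i ∘ Prod.fst := by
    intro i; funext p; simp [hT, hS]
  have hKηinv : Kη = ⋃ i, S i '' Kη := by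
    rw [hKη]
    conv_lhs => rw [hKinv]
    rw [image_iUnion]
    refine iUnion_congr fun i => ?_
    rw [← image_comp, hcomm i, image_comp]
  have hsub : ∀ i, S i '' Kη ⊆ Kη := by
    intro i
    have h := subset_iUnion (fun j => S j '' Kη) i
    rw [← hKηinv] at h
    exact h
  have hSwcons : ∀ (i : I) (w : List I), Sw (i :: w) = S i ∘ Sw w := fun i w => rfl
  have hSwsub : ∀ w : List I, Sw w '' Kη ⊆ Kη := by
    intro w
    induction w with
    | nil => simp [hSw]
    | cons i w ih =>
      rw [hSwcons, image_comp]
      exact (image_mono (f := S i) ih).trans (hsub i)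
  -- min/max contraction ratios
  have hne : (Finset.univ : Finset I).Nonempty := Finset.univ_nonempty
  set amin := Finset.univ.inf' hne a with hamin
  set amax := Finset.univ.sup' hne a with hamax
  have hamin_le : ∀ i, amin ≤ a i := fun i => Finset.inf'_le a (Finset.mem_univ i)
  have hamin_pos : 0 < amin := by
    obtain ⟨i, -, h⟩ := Finset.exists_mem_eq_inf' hne a
    rw [hamin, h]; exact ha0 i
  have hamin_le1 : amin ≤ 1 := (hamin_le i₀).trans (ha1 i₀).le
  have hle_amax : ∀ i, a i ≤ amax := fun i => Finset.le_sup' a (Finset.mem_univ i)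
  have hamax_lt1 : amax < 1 := by
    obtain ⟨i, -, h⟩ := Finset.exists_mem_eq_sup' hne a
    rw [hamax, h]; exact ha1 i
  have hamax_pos : 0 < amax := lt_of_lt_of_le (ha0 i₀) (hle_amax i₀)
  -- products
  have hpw_pos : ∀ w : List I, 0 < (w.map a).prod := by
    intro w
    apply List.prod_pos
    intro x hx
    obtain ⟨i, -, rfl⟩ := List.mem_map.1 hx
    exact ha0 i
  have hpw_le1 : ∀ w : List I, (w.map a).prod ≤ 1 := by
    intro w
    induction w with
    | nil => simp
    | cons i w ih =>
      simp only [List.map_cons, List.prod_cons]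
      exact mul_le_one₀ (ha1 i).le (hpw_pos w).le ih
  -- separation constant
  have hpair : ∀ ij : I × I, ∃ δ : ℝ, 0 < δ ∧ (¬(a ij.1 = a ij.2 ∧ d₁ ij.1 = d₁ ij.2) →
      ∀ p ∈ S ij.1 '' Kη, ∀ q ∈ S ij.2 '' Kη, δ ≤ dist p q) := by
    rintro ⟨i, j⟩
    by_cases h : a i = a j ∧ d₁ i = d₁ j
    · exact ⟨1, one_pos, fun hc => absurd h hc⟩
    · have hd : Disjoint (S i '' Kη) (S j '' Kη) := hSSC i j h
      have hA : IsCompact (S i '' Kη) := hKηc.image (by fun_prop)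
      have hB : IsCompact (S j '' Kη) := hKηc.image (by fun_prop)
      obtain ⟨δ, hδ, hth⟩ := hd.exists_thickenings hA hB.isClosed
      refine ⟨δ, hδ, fun _ p hp q hq => ?_⟩
      by_contra hlt
      push_neg at hlt
      have hq1 : q ∈ thickening δ (S i '' Kη) :=
        mem_thickening_iff.2 ⟨p, hp, by rwa [dist_comm]⟩
      have hq2 : q ∈ thickening δ (S j '' Kη) := self_subset_thickening hδ _ hq
      exact (Set.disjoint_left.1 hth) hq1 hq2
  choose f hfpos hfsep using hpair
  have hneP : (Finset.univ : Finset (I × I)).Nonempty := Finset.univ_nonempty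
  set δ := min 1 (Finset.univ.inf' hneP f) with hδdef
  have hδpos : 0 < δ := lt_min one_pos (by rw [Finset.lt_inf'_iff]; exact fun ij _ => hfpos ij)
  have hδle1 : δ ≤ 1 := min_le_left _ _
  have hδsep : ∀ i j, ¬(a i = a j ∧ d₁ i = d₁ j) →
      ∀ p ∈ S i '' Kη, ∀ q ∈ S j '' Kη, δ ≤ dist p q := by
    intro i j h p hp q hq
    exact le_trans (le_trans (min_le_right _ _)
      (Finset.inf'_le f (Finset.mem_univ (i, j)))) (hfsep (i, j) h p hp q hq)
  -- Lemma B: points of Kη close to a cylinder point lie in the cylinder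
  have lemB : ∀ w : List I, ∀ ξ ∈ Sw w '' Kη, ∀ y ∈ Kη,
      dist y ξ < δ * (w.map a).prod → y ∈ Sw w '' Kη := by
    intro w
    induction w with
    | nil => intro ξ _ y hy _; simpa [hSw] using hy
    | cons i w ih =>
      intro ξ hξ y hy hdist
      rw [hSwcons, image_comp] at hξ ⊢
      obtain ⟨ξ', hξ', rfl⟩ := hξ
      have hξ'K : ξ' ∈ Kη := hSwsub w hξ'
      have hyU : y ∈ ⋃ j, S j '' Kη := by rw [← hKηinv]; exact hy
      obtain ⟨j, y', hy', rfl⟩ : ∃ j, ∃ y' ∈ Kη, S j y' = y := by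
        simpa using hyU
      by_cases hcoleq : a j = a i ∧ d₁ j = d₁ i
      · have hyi : S j y' = S i y' := by simp [hS, hcoleq.1, hcoleq.2]
        have hkey : dist (S j y') (S i ξ') = a i * dist y' ξ' := by
          rw [hyi]
          simp only [hS, Real.dist_eq]
          rw [show a i * y' + d₁ i - (a i * ξ' + d₁ i) = a i * (y' - ξ') by ring,
            abs_mul, abs_of_pos (ha0 i)]
        have hdist' : dist y' ξ' < δ * (w.map a).prod := by
          rw [hkey] at hdist
          simp only [List.map_cons, List.prod_cons] at hdist
          have : a i * dist y' ξ' < a i * (δ * (w.map a).prod) := by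
            calc a i * dist y' ξ' < δ * (a i * (w.map a).prod) := hdist
            _ = a i * (δ * (w.map a).prod) := by ring
          exact (mul_lt_mul_iff_right₀ (ha0 i)).1 this
        have hy'mem : y' ∈ Sw w '' Kη := ih ξ' hξ' y' hy' hdist'
        rw [hyi]
        exact mem_image_of_mem (S i) hy'mem
      · exfalso
        have hsep := hδsep j i hcoleq (S j y') ⟨y', hy', rfl⟩ (S i ξ')
          ⟨ξ', hξ'K, rfl⟩
        have hle : δ * ((i :: w).map a).prod ≤ δ := by
          calc δ * ((i :: w).map a).prod ≤ δ * 1 :=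
            mul_le_mul_of_nonneg_left (hpw_le1 _) hδpos.le
          _ = δ := mul_one δ
        exact absurd hsep (not_le.2 (lt_of_lt_of_le hdist hle))
  -- Lemma A: existence of a cylinder of the right size containing a given point
  have lemA : ∀ n : ℕ, ∀ y ∈ Kη, ∀ s : ℝ, 0 < s → s ≤ 1 → amax ^ n < s →
      ∃ w : List I, y ∈ Sw w '' Kη ∧ s ≤ (w.map a).prod ∧ (w.map a).prod < s / amin := by
    intro n
    induction n with
    | zero =>
      intro y hy s hs hs1 hlt
      simp only [pow_zero] at hlt
      linarith
    | succ n ih =>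
      intro y hy s hs hs1 hlt
      by_cases hcase : amin < s
      · refine ⟨[], by simpa [hSw] using hy, by simpa using hs1, ?_⟩
        simpa using (one_lt_div hamin_pos).2 hcase
      · push_neg at hcase
        have hyU : y ∈ ⋃ j, S j '' Kη := by rw [← hKηinv]; exact hy
        obtain ⟨j, y', hy', rfl⟩ : ∃ j, ∃ y' ∈ Kη, S j y' = y := by simpa using hyU
        have h1 : 0 < s / a j := div_pos hs (ha0 j)
        have h2 : s / a j ≤ 1 := (div_le_one (ha0 j)).2 (le_trans hcase (hamin_le j))
        have h3 : amax ^ n < s / a j := by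
          rw [lt_div_iff₀ (ha0 j)]
          calc amax ^ n * a j ≤ amax ^ n * amax :=
            mul_le_mul_of_nonneg_left (hle_amax j) (pow_nonneg hamax_pos.le n)
          _ = amax ^ (n + 1) := (pow_succ amax n).symm
          _ < s := hlt
        obtain ⟨w, hw1, hw2, hw3⟩ := ih y' hy' (s / a j) h1 h2 h3
        refine ⟨j :: w, ?_, ?_, ?_⟩
        · rw [hSwcons, image_comp]
          exact mem_image_of_mem (S j) hw1
        · simp only [List.map_cons, List.prod_cons]
          exact (div_le_iff₀' (ha0 j)).1 hw2
        · simp only [List.map_cons, List.prod_cons]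
          have hj0 : a j ≠ 0 := (ha0 j).ne'
          have hm0 : amin ≠ 0 := hamin_pos.ne'
          calc a j * (w.map a).prod < a j * (s / a j / amin) :=
            mul_lt_mul_of_pos_left hw3 (ha0 j)
          _ = s / amin := by field_simp
  -- Conclusion
  refine ⟨1 / (δ * amin), by positivity, ?_⟩
  intro x hx r hr hr1
  have hxη : x.1 ∈ Kη := hKη ▸ ⟨x, hx, rfl⟩
  by_cases hcase : δ < r
  · refine ⟨[], ?_, ?_⟩
    · simp only [List.map_nil, List.prod_nil]
      rw [div_mul_eq_mul_div, one_mul, le_div_iff₀ (by positivity)]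
      nlinarith
    · simp only [List.foldr_nil, image_id]
      exact inter_subset_right
  · push_neg at hcase
    set s := r / δ with hs
    have hs0 : 0 < s := div_pos hr hδpos
    have hs1 : s ≤ 1 := (div_le_one hδpos).2 hcase
    obtain ⟨n, hn⟩ := exists_pow_lt_of_lt_one hs0 hamax_lt1
    obtain ⟨w, hw1, hw2, hw3⟩ := lemA n x.1 hxη s hs0 hs1 hn
    refine ⟨w, ?_, ?_⟩
    · have hδ0 : δ ≠ 0 := hδpos.ne'
      have hm0 : amin ≠ 0 := hamin_pos.ne'
      have heq : s / amin = 1 / (δ * amin) * r := by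
        rw [hs]; field_simp
      rw [heq] at hw3
      exact hw3.le
    · intro y hy
      obtain ⟨hyb, hyK⟩ := hy
      have hd : dist y x.1 < δ * (w.map a).prod := by
        have h1 : dist y x.1 < r := mem_ball.1 hyb
        have h2 : r = δ * s := by
          rw [hs, mul_div_cancel₀ _ hδpos.ne']
        have h3 : δ * s ≤ δ * (w.map a).prod := mul_le_mul_of_nonneg_left hw2 hδpos.le
        linarith
      exact lemB w x.1 hw1 y hyK hd
end
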